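/- Let U be an open subset of a normed vector space S, τ > 0, and consider the set U^{[0,τ]} of all functions from [0,τ] to U, viewed as a subset of the space of bounded functions [0,τ] → S with sup norm. Then trimming commutes with forming function spaces: (U^{[0,τ]})_{-ρ} = (U_{-ρ})^{[0,τ]} for every ρ > 0, where the trimming on the left is with respect to the sup norm ‖u - v‖ = sup_{t∈[0,τ]} ‖u(t) - v(t)‖. -/
import Mathlib


/-- The ρ-trimming of a set in a normed space. -/
def trim {S : Type*} [SeminormedAddCommGroup S] (A : Set S) (ρ : ℝ) : Set S :=
  {s ∈ A | Metric.closedBall s ρ ⊆ A}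

/-- Trimming commutes with forming function spaces: for an open set `U` in a normed
space and functions on the time interval `[0,τ]` with the sup-norm (uniform) distance,
the ρ-trimming of the set of `U`-valued functions equals the set of `U_{-ρ}`-valued
functions.  The closed ρ-ball around `u` in the sup distance is the set of functions
`v` with `‖v t - u t‖ ≤ ρ` for all `t`. -/
theorem trim_function_space {S : Type*} [NormedAddCommGroup S] [NormedSpace ℝ S]
    (U : Set S) (hU : IsOpen U) (τ : ℝ) (hτ : 0 < τ) (ρ : ℝ) (hρ : 0 < ρ) :
    {u : Set.Icc (0 : ℝ) τ → S |
        (∀ t, u t ∈ U) ∧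
          ∀ v : Set.Icc (0 : ℝ) τ → S, (∀ t, ‖v t - u t‖ ≤ ρ) → ∀ t, v t ∈ U} =
      {u : Set.Icc (0 : ℝ) τ → S | ∀ t, u t ∈ trim U ρ} := by
  classical
  ext u
  simp only [Set.mem_setOf_eq]
  constructor
  · rintro ⟨hu, hball⟩ t
    refine ⟨hu t, fun s hs => ?_⟩
    have := hball (Function.update u t s) ?_ t
    · simpa using this
    · intro t'
      by_cases h : t' = t
      · subst h
        simpa [Metric.mem_closedBall, dist_eq_norm] using hs
      · simp [Function.update_of_ne h, hρ.le]
  · intro h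
    refine ⟨fun t => (h t).1, fun v hv t => ?_⟩
    exact (h t).2 (by simpa [Metric.mem_closedBall, dist_eq_norm] using hv t)
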